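/- If a dynamic policy ↣ is local with respect to the relations {∼^◇_u}_{u∈D} (where α ∼^◇_u β iff ta^◇_u(α) = ta^◇_u(β)), then ∼^◇_u = ∼ᵘⁿʷ_u for all u ∈ D. -/
import Mathlib


open Classical

/-- Binary trees over actions, values of the `ta` purge functions. -/
inductive TATree (A : Type) : Type where
  | eps : TATree A
  | node : TATree A → TATree A → A → TATree A

/-- Run a deterministic system along a trace (newest action at the head of the list). -/
def runL {S A : Type} (step : S → A → S) (s0 : S) : List A → S
  | [] => s0
  | a :: α => step (runL step s0 α) a

/-- The permissive purge function `ta^◇` for a dynamic policy `P`. -/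
noncomputable def taD {D A : Type} (dm : A → D) (P : List A → D → D → Prop) :
    List A → D → TATree A
  | [], _ => TATree.eps
  | a :: α, u =>
    if P α (dm a) u then TATree.node (taD dm P α u) (taD dm P α (dm a)) a
    else taD dm P α u

/-- The unwinding relations: smallest family of equivalence relations on traces
satisfying WSC and DLR with respect to the dynamic policy `P`. -/
inductive Unw {D A : Type} (dm : A → D) (P : List A → D → D → Prop) :
    D → List A → List A → Prop where
  | refl (u : D) (α : List A) : Unw dm P u α α
  | symm {u : D} {α β : List A} : Unw dm P u α β → Unw dm P u β α
  | trans {u : D} {α β γ : List A} : Unw dm P u α β → Unw dm P u β γ → Unw dm P u α γ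
  | dlr (u : D) (α : List A) (a : A) : ¬ P α (dm a) u → Unw dm P u (a :: α) α
  | wsc (u : D) {α β : List A} (a : A) :
      Unw dm P u α β → Unw dm P (dm a) α β → Unw dm P u (a :: α) (a :: β)

/-- The prohibitive purge function `ta^□`, whose condition is distributed knowledge
of the policy edge, interpreted over the Kripke structure given by the unwinding relations. -/
noncomputable def taB {D A : Type} (dm : A → D) (P : List A → D → D → Prop) :
    List A → D → TATree A
  | [], _ => TATree.eps
  | a :: α, u =>
    if (∀ β, Unw dm P u α β → Unw dm P (dm a) α β → P β (dm a) u) then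
      TATree.node (taB dm P α u) (taB dm P α (dm a)) a
    else taB dm P α u

/-- if the policy is local with respect to the kernels of `ta^◇`, then
those kernels coincide with the unwinding relations. -/
theorem statement_5 {D A : Type} (dm : A → D) (P : List A → D → D → Prop)
    (hrefl : ∀ α u, P α u u)
    (hloc : ∀ u v (α β : List A), taD dm P α u = taD dm P β u →
        taD dm P α v = taD dm P β v → (P α u v ↔ P β u v)) :
    ∀ u (α β : List A), taD dm P α u = taD dm P β u ↔ Unw dm P u α β := by
  have fwd : ∀ u (α β : List A), Unw dm P u α β → taD dm P α u = taD dm P β u := by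
    intro u α β h
    induction h with
    | refl => rfl
    | symm _ ih => exact ih.symm
    | trans _ _ ih1 ih2 => exact ih1.trans ih2
    | dlr u α a h => simp [taD, h]
    | @wsc u α β a _ _ ih1 ih2 =>
      have hiff := hloc (dm a) u α β ih2 ih1
      by_cases hc : P α (dm a) u
      · simp [taD, hc, hiff.mp hc, ih1, ih2]
      · simp only [taD]; rw [if_neg hc, if_neg (fun h => hc (hiff.mpr h))]; exact ih1
  have bwd : ∀ n u (α β : List A), α.length + β.length ≤ n →
      taD dm P α u = taD dm P β u → Unw dm P u α β := by
    intro n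
    induction n with
    | zero =>
      intro u α β hlen heq
      have hab : α = [] ∧ β = [] := by cases α <;> cases β <;> simp_all
      obtain ⟨rfl, rfl⟩ := hab
      exact Unw.refl u []
    | succ n ih =>
      intro u α β hlen heq
      cases α with
      | nil =>
        cases β with
        | nil => exact Unw.refl u []
        | cons b β' =>
          by_cases hc : P β' (dm b) u
          · exfalso; simp [taD, hc] at heq
          · have h1 : taD dm P ([] : List A) u = taD dm P β' u := by
              simpa [taD, hc] using heq
            have h2 := ih u [] β' (by simp at hlen ⊢; omega) h1
            exact h2.trans (Unw.dlr u β' b hc).symm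
      | cons a α' =>
        by_cases hc : P α' (dm a) u
        · cases β with
          | nil => exfalso; simp [taD, hc] at heq
          | cons b β' =>
            by_cases hd : P β' (dm b) u
            · have heq' : TATree.node (taD dm P α' u) (taD dm P α' (dm a)) a
                  = TATree.node (taD dm P β' u) (taD dm P β' (dm b)) b := by
                simpa [taD, hc, hd] using heq
              rw [TATree.node.injEq] at heq'
              obtain ⟨h1, h2, rfl⟩ := heq'
              have u1 := ih u α' β' (by simp at hlen ⊢; omega) h1
              have u2 := ih (dm a) α' β' (by simp at hlen ⊢; omega) h2
              exact Unw.wsc u a u1 u2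
            · have h1 : taD dm P (a :: α') u = taD dm P β' u := by
                simpa [taD, hd] using heq
              have h2 := ih u (a :: α') β' (by simp at hlen ⊢; omega) h1
              exact h2.trans (Unw.dlr u β' b hd).symm
        · have h1 : taD dm P α' u = taD dm P β u := by
            simpa [taD, hc] using heq
          have h2 := ih u α' β (by simp at hlen ⊢; omega) h1
          exact (Unw.dlr u α' a hc).trans h2
  intro u α β
  exact ⟨fun h => bwd (α.length + β.length) u α β le_rfl h, fwd u α β⟩
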